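/- Policy improvement for causal-weighted soft RL: let S, A be finite sets, γ ∈ [0,1), r : S × A → ℝ, c : Π × S → ℝ a policy-dependent bonus (c(π,s) = α·H^B(π(·|s))), and for a policy π define Q^π as the unique fixed point of the corresponding Bellman operator. Suppose π̃ is a policy satisfying, for every state s, E_{a∼π̃(·|s)}[Q^π(s,a)] + c(π̃,s) ≥ E_{a∼π(·|s)}[Q^π(s,a)] + c(π,s). Then Q^{π̃}(s,a) ≥ Q^π(s,a) for all (s,a) ∈ S × A. -/
import Mathlib


open Real Finset

/-- Policy improvement for causal-weighted soft RL (Lemma 2): if `π̃` improves on `π` at every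
state with respect to `Q^π` plus the policy-dependent bonus `c`, then `Q^π̃ ≥ Q^π` pointwise. -/
theorem soft_policy_improvement {S A : Type*} [Fintype S] [Fintype A]
    (γ : ℝ) (hγ0 : 0 ≤ γ) (hγ1 : γ < 1)
    (r : S × A → ℝ)
    (P : S × A → S → ℝ) (hP0 : ∀ sa s', 0 ≤ P sa s') (hP1 : ∀ sa, ∑ s', P sa s' = 1)
    (c : (S → A → ℝ) → S → ℝ)
    (pol tpol : S → A → ℝ)
    (hpol0 : ∀ s a, 0 ≤ pol s a) (hpol1 : ∀ s, ∑ a, pol s a = 1)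
    (htpol0 : ∀ s a, 0 ≤ tpol s a) (htpol1 : ∀ s, ∑ a, tpol s a = 1)
    (Qpol Qtpol : S × A → ℝ)
    (hQpol : ∀ sa : S × A, Qpol sa =
      r sa + γ * ∑ s', P sa s' * (c pol s' + ∑ a', pol s' a' * Qpol (s', a')))
    (hQtpol : ∀ sa : S × A, Qtpol sa =
      r sa + γ * ∑ s', P sa s' * (c tpol s' + ∑ a', tpol s' a' * Qtpol (s', a')))
    (himp : ∀ s : S,
      (∑ a, pol s a * Qpol (s, a)) + c pol s ≤
        (∑ a, tpol s a * Qpol (s, a)) + c tpol s) :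
    ∀ sa : S × A, Qpol sa ≤ Qtpol sa := by
  intro sa
  obtain ⟨sa0, -, hmax⟩ := Finset.exists_max_image Finset.univ
    (fun x => Qpol x - Qtpol x) ⟨sa, Finset.mem_univ _⟩
  set M := Qpol sa0 - Qtpol sa0 with hM
  have hmax' : ∀ x : S × A, Qpol x - Qtpol x ≤ M := fun x => hmax x (Finset.mem_univ _)
  have inner : ∀ s' : S,
      (c pol s' + ∑ a', pol s' a' * Qpol (s', a')) -
        (c tpol s' + ∑ a', tpol s' a' * Qtpol (s', a')) ≤ M := by
    intro s'
    have h1 : (c pol s' + ∑ a', pol s' a' * Qpol (s', a')) ≤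
        (c tpol s' + ∑ a', tpol s' a' * Qpol (s', a')) := by
      have := himp s'; linarith
    have h2 : (∑ a', tpol s' a' * Qpol (s', a')) - (∑ a', tpol s' a' * Qtpol (s', a')) ≤ M := by
      rw [← Finset.sum_sub_distrib]
      calc ∑ a', (tpol s' a' * Qpol (s', a') - tpol s' a' * Qtpol (s', a'))
          ≤ ∑ a' : A, tpol s' a' * M := by
            apply Finset.sum_le_sum
            intro a' _
            rw [← mul_sub]
            exact mul_le_mul_of_nonneg_left (hmax' _) (htpol0 s' a')
        _ = M := by rw [← Finset.sum_mul, htpol1, one_mul]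
    linarith
  have key : M ≤ γ * M := by
    have hsum : (∑ s', P sa0 s' * (c pol s' + ∑ a', pol s' a' * Qpol (s', a'))) -
        (∑ s', P sa0 s' * (c tpol s' + ∑ a', tpol s' a' * Qtpol (s', a'))) ≤ M := by
      rw [← Finset.sum_sub_distrib]
      calc ∑ s', (P sa0 s' * (c pol s' + ∑ a', pol s' a' * Qpol (s', a')) -
              P sa0 s' * (c tpol s' + ∑ a', tpol s' a' * Qtpol (s', a')))
          ≤ ∑ s' : S, P sa0 s' * M := by
            apply Finset.sum_le_sum
            intro s' _
            rw [← mul_sub]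
            exact mul_le_mul_of_nonneg_left (inner s') (hP0 sa0 s')
        _ = M := by rw [← Finset.sum_mul, hP1, one_mul]
    have := hQpol sa0
    have := hQtpol sa0
    have hγmul := mul_le_mul_of_nonneg_left hsum hγ0
    nlinarith [hγmul]
  have hM0 : M ≤ 0 := by nlinarith
  linarith [hmax' sa]
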